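/- For Q = (a† + a)/√2 and P = i(a† − a)/√2 in the (q;l,λ)-coherent state |z⟩, the variances satisfy (ΔQ)² = (ΔP)² = l²q^{λ−1}/2 + (q^{−1}−1)|z|²/2, so the states saturate equality (ΔQ)² = (ΔP)² = ΔQ·ΔP. -/

import Mathlib

/-- Annihilation operator: `(a f) n = √φ(n+1) f (n+1)`, i.e. `a|n⟩ = √φ(n)|n-1⟩`. -/
noncomputable def aOp (φ : ℕ → ℝ) : Module.End ℂ (ℕ → ℂ) where
  toFun f := fun n => (Real.sqrt (φ (n + 1)) : ℂ) * f (n + 1)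
  map_add' f g := by funext n; simp [mul_add]
  map_smul' c f := by funext n; simp [smul_eq_mul]; ring

/-- Creation operator: `a†|n⟩ = √φ(n+1)|n+1⟩`. -/
noncomputable def adOp (φ : ℕ → ℝ) : Module.End ℂ (ℕ → ℂ) where
  toFun f := fun n => if n = 0 then 0 else (Real.sqrt (φ n) : ℂ) * f (n - 1)
  map_add' f g := by
    funext n; by_cases h : n = 0 <;> simp [h, mul_add]
  map_smul' c f := by
    funext n; by_cases h : n = 0 <;> simp [h, smul_eq_mul] <;> ring

/-- Sesquilinear pairing on sequences. -/
noncomputable def ip (f g : ℕ → ℂ) : ℂ := ∑' n : ℕ, (starRingEnd ℂ) (f n) * g n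

/-- Expectation value of an operator `T` in the state `f`. -/
noncomputable def expval (T : Module.End ℂ (ℕ → ℂ)) (f : ℕ → ℂ) : ℂ :=
  ip f (T f) / ip f f

/-- `a†` is adjoint to `a` at the level of (formal) pairings. -/
lemma adj_aux (φ : ℕ → ℝ) (f g : ℕ → ℂ) :
    ∑' n : ℕ, (starRingEnd ℂ) (f n) * (adOp φ g) n
      = ∑' n : ℕ, (starRingEnd ℂ) ((aOp φ f) n) * g n := by
  have hinj : Function.Injective (fun m : ℕ => m + 1) := fun a b h => by simpa using h
  have hsupp : Function.support (fun n => (starRingEnd ℂ) (f n) * (adOp φ g) n)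
      ⊆ Set.range (fun m : ℕ => m + 1) := by
    intro x hx
    rcases x with _ | m
    · exfalso; apply hx; simp [adOp]
    · exact ⟨m, rfl⟩
  rw [← hinj.tsum_eq hsupp]
  apply tsum_congr
  intro m
  simp only [adOp, aOp, LinearMap.coe_mk, AddHom.coe_mk, Nat.succ_ne_zero, if_false,
    Nat.add_sub_cancel, map_mul, Complex.conj_ofReal]
  ring

lemma adjS_aux (φ : ℕ → ℝ) (f g : ℕ → ℂ)
    (h : Summable fun n => (starRingEnd ℂ) ((aOp φ f) n) * g n) :
    Summable fun n => (starRingEnd ℂ) (f n) * (adOp φ g) n := by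
  have hinj : Function.Injective (fun m : ℕ => m + 1) := fun a b h => by simpa using h
  have hsupp : ∀ x ∉ Set.range (fun m : ℕ => m + 1),
      (starRingEnd ℂ) (f x) * (adOp φ g) x = 0 := by
    intro x hx
    rcases x with _ | m
    · simp [adOp]
    · exact absurd ⟨m, rfl⟩ hx
  rw [← hinj.summable_iff hsupp]
  apply h.congr
  intro m
  simp only [Function.comp_apply, adOp, aOp, LinearMap.coe_mk, AddHom.coe_mk,
    Nat.succ_ne_zero, if_false, Nat.add_sub_cancel, map_mul, Complex.conj_ofReal]
  ring

lemma ip_split (f A B : ℕ → ℂ) (x y u : ℂ)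
    (hA : Summable fun n => (starRingEnd ℂ) (f n) * A n)
    (hB : Summable fun n => (starRingEnd ℂ) (f n) * B n)
    (hf : Summable fun n => (starRingEnd ℂ) (f n) * f n) :
    ip f (x • A + y • B + u • f)
      = x * (∑' n : ℕ, (starRingEnd ℂ) (f n) * A n)
        + y * (∑' n : ℕ, (starRingEnd ℂ) (f n) * B n)
        + u * (∑' n : ℕ, (starRingEnd ℂ) (f n) * f n) := by
  unfold ip
  have h1 : ∀ n : ℕ, (starRingEnd ℂ) (f n) * (x • A + y • B + u • f) n
      = x * ((starRingEnd ℂ) (f n) * A n)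
        + (y * ((starRingEnd ℂ) (f n) * B n) + u * ((starRingEnd ℂ) (f n) * f n)) := by
    intro n; simp only [Pi.add_apply, Pi.smul_apply, smul_eq_mul]; ring
  rw [tsum_congr h1, Summable.tsum_add (hA.mul_left x) ((hB.mul_left y).add (hf.mul_left u)),
    Summable.tsum_add (hB.mul_left y) (hf.mul_left u), tsum_mul_left, tsum_mul_left, tsum_mul_left]
  ring

set_option maxHeartbeats 1000000

theorem stmt16 (l lam q : ℝ) (hl : l ≠ 0) (hq0 : 0 < q) (hq1 : q < 1)
    (φ : ℕ → ℝ)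
    (hφ : ∀ j : ℕ, φ j = l ^ 2 * q ^ lam * (1 - q ^ (-(j : ℝ))) / (q - 1))
    (γ : ℝ) (hγ : γ = l ^ 2 * q ^ (lam - 1) / (1 - q))
    (qp : ℕ → ℝ) (hqp : ∀ n : ℕ, qp n = ∏ k ∈ Finset.range n, (1 - q ^ (k + 1)))
    (Nf : ℝ → ℝ)
    (hN : ∀ t : ℝ, Nf t = ∑' n : ℕ, q ^ (n * (n - 1) / 2) * t ^ n / (γ ^ n * qp n))
    (ψ : ℂ → ℕ → ℂ)
    (hψ : ∀ (z : ℂ) (n : ℕ), ψ z n =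
      (((Real.sqrt (Nf (‖z‖ ^ 2)))⁻¹ *
        q ^ ((n * (n - 1) : ℝ) / 4) * (Real.sqrt (γ ^ n * qp n))⁻¹ : ℝ) : ℂ) * z ^ n)
    (Q P : Module.End ℂ (ℕ → ℂ))
    (hQ : Q = ((Real.sqrt 2 : ℂ))⁻¹ • (adOp φ + aOp φ))
    (hP : P = (Complex.I * ((Real.sqrt 2 : ℂ))⁻¹) • (adOp φ - aOp φ)) :
    ∀ z : ℂ,
      let v : ℝ := l ^ 2 * q ^ (lam - 1) / 2 + (q⁻¹ - 1) * ‖z‖ ^ 2 / 2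
      expval (Q * Q) (ψ z) - (expval Q (ψ z)) ^ 2 = (v : ℂ) ∧
      expval (P * P) (ψ z) - (expval P (ψ z)) ^ 2 = (v : ℂ) ∧
      Real.sqrt v * Real.sqrt v = v := by
  have hqne : q ≠ 0 := ne_of_gt hq0
  have h1q : (0:ℝ) < 1 - q := by linarith
  have hl2 : (0:ℝ) < l ^ 2 := by positivity
  have hγpos : 0 < γ := by
    rw [hγ]; exact div_pos (mul_pos hl2 (Real.rpow_pos_of_pos hq0 _)) h1q
  have hqp_pos : ∀ n, 0 < qp n := by
    intro n
    rw [hqp]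
    apply Finset.prod_pos
    intro k _
    have : q ^ (k + 1) < 1 := pow_lt_one₀ hq0.le hq1 (by omega)
    linarith
  have hqp_succ : ∀ n : ℕ, qp (n+1) = qp n * (1 - q ^ (n+1)) := by
    intro n; rw [hqp, hqp, Finset.prod_range_succ]
  have hφzero : φ 0 = 0 := by
    rw [hφ]; simp
  have hφ' : ∀ n : ℕ, φ (n+1) = γ * q ^ (-(n:ℝ)) * (1 - q^(n+1)) := by
    intro n
    have hq1ne : q - 1 ≠ 0 := by intro h; nlinarith
    have h1qne : 1 - q ≠ 0 := ne_of_gt h1q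
    have hE : q ^ (-((n+1:ℕ):ℝ)) = q ^ (-(n:ℝ)) * q⁻¹ := by
      have h : (-((n+1:ℕ):ℝ)) = (-(n:ℝ)) + (-1) := by push_cast; ring
      rw [h, Real.rpow_add hq0, Real.rpow_neg_one]
    have hql : q ^ (lam - 1) = q ^ lam * q⁻¹ := by
      rw [Real.rpow_sub hq0, Real.rpow_one, div_eq_mul_inv]
    have hEn : q ^ (-(n:ℝ)) * q ^ n = 1 := by
      rw [← Real.rpow_natCast q n, ← Real.rpow_add hq0]; simp
    rw [hφ, hγ, hE, hql, pow_succ]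
    field_simp
    linear_combination (l * l * q ^ lam * q^2 * (q - 1) + (-q + q^2 + q^2*l^2*q^lam - q^3*l^2*q^lam)) * hEn
  have hφnn : ∀ j : ℕ, 0 ≤ φ j := by
    intro j
    rcases j with _ | n
    · rw [hφzero]
    · rw [hφ' n]
      have hBq : q ^ (n+1) < 1 := pow_lt_one₀ hq0.le hq1 (by omega)
      have h := Real.rpow_pos_of_pos hq0 (-(n:ℝ))
      exact mul_nonneg (mul_nonneg hγpos.le h.le) (by linarith)
  have hrec : ∀ n : ℕ, φ (n+1) = q⁻¹ * φ n + l^2 * q^(lam-1) := by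
    intro n
    have hq1ne : q - 1 ≠ 0 := by intro h; nlinarith
    have hE : q ^ (-((n+1:ℕ):ℝ)) = q ^ (-(n:ℝ)) * q⁻¹ := by
      have h : (-((n+1:ℕ):ℝ)) = (-(n:ℝ)) + (-1) := by push_cast; ring
      rw [h, Real.rpow_add hq0, Real.rpow_neg_one]
    have hql : q ^ (lam - 1) = q ^ lam * q⁻¹ := by
      rw [Real.rpow_sub hq0, Real.rpow_one, div_eq_mul_inv]
    rw [hφ, hφ, hE, hql]
    field_simp
    ring
  -- the key sqrt identity
  have key : ∀ n : ℕ, Real.sqrt (φ (n+1)) *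
        (q ^ (((n:ℝ)+1) * ((n:ℝ)+1-1) / 4) * (Real.sqrt (γ^(n+1) * qp (n+1)))⁻¹)
      = q ^ ((n:ℝ) * ((n:ℝ)-1) / 4) * (Real.sqrt (γ^n * qp n))⁻¹ := by
    intro n
    have hBq : q ^ (n+1) < 1 := pow_lt_one₀ hq0.le hq1 (by omega)
    have hB : 0 < 1 - q^(n+1) := by linarith
    have hA : 0 < γ^n * qp n := mul_pos (pow_pos hγpos n) (hqp_pos n)
    have hA' : 0 < γ^(n+1) * qp (n+1) := mul_pos (pow_pos hγpos (n+1)) (hqp_pos (n+1))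
    have hφpos : 0 ≤ φ (n+1) := hφnn (n+1)
    have hL : 0 ≤ Real.sqrt (φ (n+1)) *
        (q ^ (((n:ℝ)+1) * ((n:ℝ)+1-1) / 4) * (Real.sqrt (γ^(n+1) * qp (n+1)))⁻¹) := by
      have h1 := Real.sqrt_nonneg (φ (n+1))
      have h2 : (0:ℝ) < q ^ (((n:ℝ)+1) * ((n:ℝ)+1-1) / 4) := Real.rpow_pos_of_pos hq0 _
      have h3 := Real.sqrt_nonneg (γ^(n+1) * qp (n+1))
      positivity
    have hR : 0 ≤ q ^ ((n:ℝ) * ((n:ℝ)-1) / 4) * (Real.sqrt (γ^n * qp n))⁻¹ := by positivity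
    have hsq : (Real.sqrt (φ (n+1)) *
          (q ^ (((n:ℝ)+1) * ((n:ℝ)+1-1) / 4) * (Real.sqrt (γ^(n+1) * qp (n+1)))⁻¹))^2
        = (q ^ ((n:ℝ) * ((n:ℝ)-1) / 4) * (Real.sqrt (γ^n * qp n))⁻¹)^2 := by
      have e1 : (Real.sqrt (φ (n+1)))^2 = φ (n+1) := Real.sq_sqrt hφpos
      have e2 : ((Real.sqrt (γ^(n+1) * qp (n+1)))⁻¹)^2 = (γ^(n+1) * qp (n+1))⁻¹ := by
        rw [← Real.sqrt_inv, Real.sq_sqrt (by positivity)]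
      have e3 : ((Real.sqrt (γ^n * qp n))⁻¹)^2 = (γ^n * qp n)⁻¹ := by
        rw [← Real.sqrt_inv, Real.sq_sqrt (by positivity)]
      have e4 : (q ^ (((n:ℝ)+1) * ((n:ℝ)+1-1) / 4))^2 = q ^ (((n:ℝ)+1) * (n:ℝ) / 2) := by
        rw [← Real.rpow_natCast (q ^ _) 2, ← Real.rpow_mul hq0.le]; ring_nf
      have e5 : (q ^ ((n:ℝ) * ((n:ℝ)-1) / 4))^2 = q ^ ((n:ℝ) * ((n:ℝ)-1) / 2) := by
        rw [← Real.rpow_natCast (q ^ _) 2, ← Real.rpow_mul hq0.le]; ring_nf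
      have e6 : q ^ (((n:ℝ)+1) * (n:ℝ) / 2) = q ^ ((n:ℝ) * ((n:ℝ)-1) / 2) * q ^ (n:ℕ) := by
        rw [← Real.rpow_natCast q n, ← Real.rpow_add hq0]; ring_nf
      have e7 : q ^ (-(n:ℝ)) * q ^ (n:ℕ) = 1 := by
        rw [← Real.rpow_natCast q n, ← Real.rpow_add hq0]; simp
      rw [mul_pow, mul_pow, mul_pow, e1, e2, e3, e4, e5, hφ', hqp_succ, pow_succ, e6]
      have hBne : (1:ℝ) - q ^ n * q ≠ 0 := by rw [← pow_succ]; exact ne_of_gt hB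
      have hBpos' : (0:ℝ) < 1 - q ^ n * q := by rw [← pow_succ]; exact hB
      have hD : (0:ℝ) < γ ^ (n+1) * (qp n * (1 - q ^ n * q)) :=
        mul_pos (pow_pos hγpos _) (mul_pos (hqp_pos n) hBpos')
      field_simp
      linear_combination (q ^ ((n:ℝ) * ((n:ℝ)-1) / 2) * qp n * (1 - q ^ n * q) * γ ^ (n+1) + (γ*γ^n*qp n*q ^ ((n:ℝ) * ((n:ℝ)-1) / 2)*(q*q^n - 1) + γ*γ^n*(qp n)⁻¹)) * e7
    nlinarith [hL, hR, hsq]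
  intro z
  set t : ℝ := ‖z‖ ^ 2 with ht
  have ht0 : 0 ≤ t := by positivity
  -- summability of the normalization series
  set g : ℕ → ℝ := fun n => q ^ (n * (n - 1) / 2) * t ^ n / (γ ^ n * qp n) with hgdef
  have hg0 : ∀ n, 0 ≤ g n := by
    intro n
    have := hqp_pos n
    have := pow_pos hγpos n
    positivity
  have hexp : ∀ n : ℕ, (n+1) * ((n+1) - 1) / 2 = n * (n-1)/2 + n := by
    intro n
    rcases n with _ | m
    · simp
    · have h : (m+1+1) * (m+1+1-1) = (m+1)*((m+1)-1) + 2*(m+1) := by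
        simp [Nat.succ_sub_one]; ring
      rw [h, Nat.add_mul_div_left _ _ (by norm_num : (0:ℕ) < 2)]
  have hgrec : ∀ n : ℕ, g (n+1) = g n * (q^n * t / (γ * (1 - q^(n+1)))) := by
    intro n
    have hBq : q ^ (n+1) < 1 := pow_lt_one₀ hq0.le hq1 (by omega)
    have hB : 0 < 1 - q^(n+1) := by linarith
    simp only [hgdef]
    rw [hexp n, pow_add, pow_succ t n, pow_succ γ n, hqp_succ, div_mul_div_comm]
    congr 1 <;> ring
  have hgsum : Summable g := by
    apply summable_of_ratio_norm_eventually_le (r := 1/2) (by norm_num)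
    have hlim : Filter.Tendsto (fun n : ℕ => q^n * t) Filter.atTop (nhds 0) := by
      have h := (tendsto_pow_atTop_nhds_zero_of_lt_one hq0.le hq1).mul_const t
      simpa using h
    have hc : (0:ℝ) < γ * (1 - q) / 2 := by positivity
    filter_upwards [hlim.eventually_lt_const hc] with n hn
    have hBq : q ^ (n+1) < 1 := pow_lt_one₀ hq0.le hq1 (by omega)
    have hB : 0 < 1 - q^(n+1) := by linarith
    have hqle : q ^ (n+1) ≤ q := by
      calc q ^ (n+1) ≤ q ^ 1 := pow_le_pow_of_le_one hq0.le hq1.le (by omega)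
      _ = q := pow_one q
    have hB' : 1 - q ≤ 1 - q^(n+1) := by linarith
    rw [Real.norm_eq_abs, Real.norm_eq_abs, abs_of_nonneg (hg0 _), abs_of_nonneg (hg0 _),
      hgrec n]
    have hr : q^n * t / (γ * (1 - q^(n+1))) ≤ 1/2 := by
      rw [div_le_iff₀ (by positivity)]
      have h1 : γ * (1 - q) ≤ γ * (1 - q^(n+1)) := mul_le_mul_of_nonneg_left hB' hγpos.le
      linarith
    have hrnn : 0 ≤ q^n * t / (γ * (1 - q^(n+1))) := by positivity
    calc g n * (q^n * t / (γ * (1 - q^(n+1)))) ≤ g n * (1/2) :=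
          mul_le_mul_of_nonneg_left hr (hg0 n)
      _ = 1/2 * g n := by ring
  have hNt : Nf t = ∑' n, g n := hN t
  have hNpos : 0 < Nf t := by
    rw [hNt]
    apply Summable.tsum_pos hgsum hg0 0
    have hg00 : g 0 = 1 := by
      simp only [hgdef]
      rw [hqp]
      norm_num
    rw [hg00]
    norm_num
  -- pointwise norm computation
  set f : ℕ → ℂ := ψ z with hfdef
  have hcast : ∀ n : ℕ, ((n:ℝ) * ((n:ℝ) - 1)) / 4 * 2 = ((n * (n-1)/2 : ℕ) : ℝ) := by
    intro n
    rcases n with _ | m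
    · simp
    · have hdvd : 2 ∣ (m+1) * ((m+1) - 1) := by
        have hev : Even ((m+1) * m) := by
          rw [Nat.mul_comm]; exact Nat.even_mul_succ_self m
        simpa using hev.two_dvd
      have h2 : (((m+1) * ((m+1) - 1) / 2 : ℕ) : ℝ) * 2 = (((m+1) * ((m+1) - 1) : ℕ) : ℝ) := by
        rw_mod_cast [Nat.div_mul_cancel hdvd]
      push_cast [Nat.succ_sub_one] at h2 ⊢
      linarith
  have hnorm : ∀ n : ℕ, (starRingEnd ℂ) (f n) * f n = (((Nf t)⁻¹ * g n : ℝ) : ℂ) := by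
    intro n
    have hA : 0 < γ^n * qp n := mul_pos (pow_pos hγpos n) (hqp_pos n)
    rw [hfdef, hψ]
    have heq : ∀ w : ℂ, (starRingEnd ℂ) w * w = ((Complex.normSq w : ℝ) : ℂ) := by
      intro w; rw [Complex.normSq_eq_conj_mul_self]
    rw [heq]
    congr 1
    rw [Complex.normSq_mul, Complex.normSq_ofReal, map_pow Complex.normSq z n,
      Complex.normSq_eq_norm_sq, ← ht]
    have m1 : (Real.sqrt (Nf t))⁻¹ * (Real.sqrt (Nf t))⁻¹ = (Nf t)⁻¹ := by
      rw [← mul_inv, Real.mul_self_sqrt hNpos.le]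
    have m2 : (Real.sqrt (γ^n * qp n))⁻¹ * (Real.sqrt (γ^n * qp n))⁻¹ = (γ^n * qp n)⁻¹ := by
      rw [← mul_inv, Real.mul_self_sqrt hA.le]
    have m3 : q ^ ((n * (n - 1) : ℝ) / 4) * q ^ ((n * (n - 1) : ℝ) / 4)
        = q ^ (n * (n-1)/2 : ℕ) := by
      rw [← Real.rpow_add hq0,
        show ((n:ℝ) * ((n:ℝ) - 1)) / 4 + ((n:ℝ) * ((n:ℝ) - 1)) / 4
          = ((n * (n-1)/2 : ℕ) : ℝ) from by rw [← hcast n]; ring,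
        Real.rpow_natCast]
    simp only [hgdef]
    calc ((Real.sqrt (Nf t))⁻¹ * q ^ ((n * (n - 1) : ℝ) / 4) * (Real.sqrt (γ^n * qp n))⁻¹)
          * ((Real.sqrt (Nf t))⁻¹ * q ^ ((n * (n - 1) : ℝ) / 4) * (Real.sqrt (γ^n * qp n))⁻¹)
          * t ^ n
        = ((Real.sqrt (Nf t))⁻¹ * (Real.sqrt (Nf t))⁻¹)
          * (q ^ ((n * (n - 1) : ℝ) / 4) * q ^ ((n * (n - 1) : ℝ) / 4))
          * ((Real.sqrt (γ^n * qp n))⁻¹ * (Real.sqrt (γ^n * qp n))⁻¹) * t ^ n := by ring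
      _ = (Nf t)⁻¹ * q ^ (n * (n-1)/2 : ℕ) * (γ^n * qp n)⁻¹ * t ^ n := by rw [m1, m2, m3]
      _ = (Nf t)⁻¹ * (q ^ (n * (n-1)/2 : ℕ) * t ^ n / (γ^n * qp n)) := by ring
  have Sb : Summable (fun n => (starRingEnd ℂ) (f n) * f n) := by
    apply Summable.congr ((Complex.summable_ofReal).mpr (hgsum.mul_left (Nf t)⁻¹))
    intro n; rw [hnorm n]
  have hS : ip f f = 1 := by
    unfold ip
    rw [tsum_congr hnorm, ← Complex.ofReal_tsum, tsum_mul_left, ← hNt,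
      inv_mul_cancel₀ hNpos.ne']
    simp
  -- eigenvector property
  have haψ : aOp φ f = z • f := by
    funext n
    simp only [aOp, LinearMap.coe_mk, AddHom.coe_mk, Pi.smul_apply, smul_eq_mul]
    rw [hfdef, hψ, hψ, ← ht]
    have hE : ((↑(n+1):ℝ) * ((↑(n+1):ℝ) - 1))/4 = ((n:ℝ)+1)*((n:ℝ)+1-1)/4 := by push_cast; ring
    rw [hE]
    have hkey := key n
    have lhs : (Real.sqrt (φ (n+1)) : ℂ) *
        (((Real.sqrt (Nf t))⁻¹ * q ^ (((n:ℝ)+1)*((n:ℝ)+1-1)/4) * (Real.sqrt (γ^(n+1) * qp (n+1)))⁻¹ : ℝ) : ℂ) * z ^ (n+1)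
        = (((Real.sqrt (Nf t))⁻¹ : ℝ) : ℂ) *
          ((Real.sqrt (φ (n+1)) * (q ^ (((n:ℝ)+1)*((n:ℝ)+1-1)/4) * (Real.sqrt (γ^(n+1) * qp (n+1)))⁻¹) : ℝ) : ℂ) * z ^ (n+1) := by
      push_cast
      ring
    calc (Real.sqrt (φ (n+1)) : ℂ) *
          ((((Real.sqrt (Nf t))⁻¹ * q ^ (((n:ℝ)+1)*((n:ℝ)+1-1)/4) * (Real.sqrt (γ^(n+1) * qp (n+1)))⁻¹ : ℝ) : ℂ) * z ^ (n+1))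
        = (((Real.sqrt (Nf t))⁻¹ : ℝ) : ℂ) *
          ((Real.sqrt (φ (n+1)) * (q ^ (((n:ℝ)+1)*((n:ℝ)+1-1)/4) * (Real.sqrt (γ^(n+1) * qp (n+1)))⁻¹) : ℝ) : ℂ) * z ^ (n+1) := by
          push_cast; ring
      _ = (((Real.sqrt (Nf t))⁻¹ : ℝ) : ℂ) *
          ((q ^ ((n:ℝ) * ((n:ℝ)-1) / 4) * (Real.sqrt (γ^n * qp n))⁻¹ : ℝ) : ℂ) * z ^ (n+1) := by
          rw [hkey]
      _ = z * ((((Real.sqrt (Nf t))⁻¹ * q ^ (((n:ℝ) * ((n:ℝ)-1))/4) * (Real.sqrt (γ^n * qp n))⁻¹ : ℝ) : ℂ) * z ^ n) := by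
          push_cast; ring
  -- operator algebra
  set A1 : ℕ → ℂ := (adOp φ) f with hA1def
  set A2 : ℕ → ℂ := (adOp φ) A1 with hA2def
  set c0C : ℂ := ((l^2 * q^(lam-1) : ℝ) : ℂ) with hc0def
  set qiC : ℂ := ((q⁻¹ : ℝ) : ℂ) with hqidef
  set sC : ℂ := ((Real.sqrt 2 : ℝ) : ℂ)⁻¹ with hsdef
  set wC : ℂ := Complex.I * sC with hwdef
  have haad : ∀ h : ℕ → ℂ, (aOp φ) ((adOp φ) h) = fun n => ((φ (n+1) : ℝ) : ℂ) * h n := by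
    intro h
    funext n
    simp only [aOp, adOp, LinearMap.coe_mk, AddHom.coe_mk, Nat.succ_ne_zero, if_false,
      Nat.add_sub_cancel]
    rw [← mul_assoc, ← Complex.ofReal_mul, Real.mul_self_sqrt (hφnn (n+1))]
  have hada : ∀ h : ℕ → ℂ, (adOp φ) ((aOp φ) h) = fun n => ((φ n : ℝ) : ℂ) * h n := by
    intro h
    funext n
    rcases n with _ | m
    · simp [adOp, hφzero]
    · simp only [adOp, aOp, LinearMap.coe_mk, AddHom.coe_mk, Nat.succ_ne_zero, if_false,
        Nat.add_sub_cancel]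
      rw [← mul_assoc, ← Complex.ofReal_mul, Real.mul_self_sqrt (hφnn (m+1))]
  have hzA1 : z • A1 = fun n => ((φ n : ℝ) : ℂ) * f n := by
    rw [hA1def, ← map_smul (adOp φ) z f, ← haψ, hada]
  have hA1a : (aOp φ) A1 = (qiC * z) • A1 + c0C • f := by
    rw [hA1def, haad f]
    funext n
    have hz' : z * A1 n = ((φ n : ℝ) : ℂ) * f n := by
      have := congrFun hzA1 n
      simpa using this
    simp only [Pi.add_apply, Pi.smul_apply, smul_eq_mul]
    rw [mul_assoc, hz', hrec n, hc0def, hqidef]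
    push_cast
    ring
  have hs2 : sC * sC = (2:ℂ)⁻¹ := by
    rw [hsdef, ← mul_inv, ← Complex.ofReal_mul, Real.mul_self_sqrt (by norm_num)]
    norm_num
  have hw2 : wC * wC = -(sC * sC) := by
    rw [hwdef]
    have := Complex.I_mul_I
    ring_nf
    rw [Complex.I_sq]
    ring
  -- Q and P applied to f
  have hQf : Q f = sC • A1 + (0:ℂ) • A1 + (sC * z) • f := by
    rw [hQ, LinearMap.smul_apply, LinearMap.add_apply, haψ, ← hA1def]
    funext n
    simp only [Pi.smul_apply, Pi.add_apply, smul_eq_mul, hsdef]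
    ring
  have hPf : P f = wC • A1 + (0:ℂ) • A1 + (-(wC * z)) • f := by
    rw [hP, LinearMap.smul_apply, LinearMap.sub_apply, haψ, ← hA1def]
    funext n
    simp only [Pi.smul_apply, Pi.add_apply, Pi.sub_apply, smul_eq_mul, hsdef, hwdef]
    ring
  have hQQf : (Q * Q) f = (sC*sC) • A2 + (sC*sC*(z + qiC*z)) • A1 + (sC*sC*(c0C + z^2)) • f := by
    rw [Module.End.mul_apply, hQf, hQ, LinearMap.smul_apply, LinearMap.add_apply]
    simp only [map_add, map_smul]
    rw [hA1a, haψ, ← hA2def]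
    funext n
    simp only [Pi.add_apply, Pi.smul_apply, smul_eq_mul, hsdef]
    ring
  have hPPf : (P * P) f = (wC*wC) • A2 + (-(wC*wC*(z + qiC*z))) • A1 + (wC*wC*(z^2 - c0C)) • f := by
    rw [Module.End.mul_apply, hPf, hP, LinearMap.smul_apply, LinearMap.sub_apply]
    simp only [map_add, map_smul, map_neg]
    rw [hA1a, haψ, ← hA2def]
    funext n
    simp only [Pi.add_apply, Pi.sub_apply, Pi.smul_apply, Pi.neg_apply, smul_eq_mul, hsdef, hwdef]
    ring
  -- tsum values
  have T0 : (∑' n : ℕ, (starRingEnd ℂ) (f n) * f n) = 1 := by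
    have := hS
    unfold ip at this
    exact this
  have S1' : Summable (fun n => (starRingEnd ℂ) (((aOp φ) f) n) * f n) := by
    rw [haψ]
    apply Summable.congr (Sb.mul_left ((starRingEnd ℂ) z))
    intro n
    simp only [Pi.smul_apply, smul_eq_mul, map_mul]
    ring
  have S1 : Summable (fun n => (starRingEnd ℂ) (f n) * A1 n) := by
    have h := adjS_aux φ f f S1'
    rwa [← hA1def] at h
  have S2' : Summable (fun n => (starRingEnd ℂ) (((aOp φ) f) n) * A1 n) := by
    rw [haψ]
    apply Summable.congr (S1.mul_left ((starRingEnd ℂ) z))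
    intro n
    simp only [Pi.smul_apply, smul_eq_mul, map_mul]
    ring
  have S2 : Summable (fun n => (starRingEnd ℂ) (f n) * A2 n) := by
    have h := adjS_aux φ f A1 S2'
    rwa [← hA2def] at h
  have T1 : (∑' n : ℕ, (starRingEnd ℂ) (f n) * A1 n) = (starRingEnd ℂ) z := by
    have h := adj_aux φ f f
    rw [← hA1def, haψ] at h
    rw [h]
    calc (∑' n : ℕ, (starRingEnd ℂ) ((z • f) n) * f n)
        = ∑' n : ℕ, (starRingEnd ℂ) z * ((starRingEnd ℂ) (f n) * f n) := by
          apply tsum_congr; intro n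
          simp only [Pi.smul_apply, smul_eq_mul, map_mul]; ring
      _ = (starRingEnd ℂ) z * ∑' n : ℕ, (starRingEnd ℂ) (f n) * f n := tsum_mul_left
      _ = (starRingEnd ℂ) z := by rw [T0, mul_one]
  have T2 : (∑' n : ℕ, (starRingEnd ℂ) (f n) * A2 n) = (starRingEnd ℂ) z * (starRingEnd ℂ) z := by
    have h := adj_aux φ f A1
    rw [← hA2def, haψ] at h
    rw [h]
    calc (∑' n : ℕ, (starRingEnd ℂ) ((z • f) n) * A1 n)
        = ∑' n : ℕ, (starRingEnd ℂ) z * ((starRingEnd ℂ) (f n) * A1 n) := by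
          apply tsum_congr; intro n
          simp only [Pi.smul_apply, smul_eq_mul, map_mul]; ring
      _ = (starRingEnd ℂ) z * ∑' n : ℕ, (starRingEnd ℂ) (f n) * A1 n := tsum_mul_left
      _ = (starRingEnd ℂ) z * (starRingEnd ℂ) z := by rw [T1]
  -- expectation values
  have eQ : expval Q f = sC * (starRingEnd ℂ) z + sC * z := by
    unfold expval
    rw [hS, div_one, hQf, ip_split f A1 A1 sC 0 (sC*z) S1 S1 Sb, T1, T0]
    ring
  have eQQ : expval (Q*Q) f = (sC*sC) * ((starRingEnd ℂ) z * (starRingEnd ℂ) z)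
      + (sC*sC*(z + qiC*z)) * (starRingEnd ℂ) z + (sC*sC*(c0C + z^2)) := by
    unfold expval
    rw [hS, div_one, hQQf, ip_split f A2 A1 _ _ _ S2 S1 Sb, T2, T1, T0]
    ring
  have eP : expval P f = wC * (starRingEnd ℂ) z - wC * z := by
    unfold expval
    rw [hS, div_one, hPf, ip_split f A1 A1 wC 0 (-(wC*z)) S1 S1 Sb, T1, T0]
    ring
  have ePP : expval (P*P) f = (wC*wC) * ((starRingEnd ℂ) z * (starRingEnd ℂ) z)
      - (wC*wC*(z + qiC*z)) * (starRingEnd ℂ) z + (wC*wC*(z^2 - c0C)) := by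
    unfold expval
    rw [hS, div_one, hPPf, ip_split f A2 A1 _ _ _ S2 S1 Sb, T2, T1, T0]
    ring
  -- final algebra
  have hz : ((t : ℝ) : ℂ) = z * (starRingEnd ℂ) z := by
    rw [Complex.mul_conj, ht]
    norm_cast
    exact Complex.sq_norm z
  have hvc : ((l ^ 2 * q ^ (lam - 1) / 2 + (q⁻¹ - 1) * t / 2 : ℝ) : ℂ)
      = c0C/2 + (qiC - 1) * ((t:ℝ):ℂ)/2 := by
    rw [hc0def, hqidef]
    push_cast
    ring
  have h1qi : (1:ℝ) ≤ q⁻¹ := by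
    nlinarith [mul_inv_cancel₀ hqne, inv_pos.mpr hq0]
  refine ⟨?_, ?_, ?_⟩
  · rw [eQQ, eQ, hvc, hz]
    linear_combination ((qiC - 1) * (z * (starRingEnd ℂ) z) + c0C) * hs2
  · rw [ePP, eP, hvc, hz, hw2]
    linear_combination ((qiC - 1) * (z * (starRingEnd ℂ) z) + c0C) * hs2
      + (-(((starRingEnd ℂ) z - z)^2)) * hw2
  · apply Real.mul_self_sqrt
    have h2 : (0:ℝ) ≤ (q⁻¹ - 1) * t / 2 := by
      apply div_nonneg _ (by norm_num)
      exact mul_nonneg (by linarith) ht0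
    have h3 : (0:ℝ) < l ^ 2 * q ^ (lam - 1) / 2 := by
      have := Real.rpow_pos_of_pos hq0 (lam - 1)
      positivity
    linarith
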